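/- Let f_k(x) = Σ_{j=1}^{k} (1/j)(1−e^{−x})^j for k > 2. Then for all x ≥ 0: (i) f_k(x) ≤ min{x, 1 + log k}; and (ii) f_k(x) ≥ min{x, 1} − 2^{−0.66 k}. -/
import Mathlib


/- STATEMENT 10: bounds on the soft truncation function
`f_k(x) = Σ_{j=1}^k (1/j)(1−e^{−x})^j`: for `k > 2` and `x ≥ 0`,
`f_k(x) ≤ min{x, 1 + log k}` and `f_k(x) ≥ min{x,1} − 2^{−0.66k}`. -/

noncomputable def fk (k : ℕ) (x : ℝ) : ℝ :=
  ∑ j ∈ Finset.Icc 1 k, (1 / (j : ℝ)) * (1 - Real.exp (-x)) ^ j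

open Real Finset

lemma fk_eq (k : ℕ) (x : ℝ) :
    fk k x = ∑ n ∈ Finset.range k, (1 - Real.exp (-x)) ^ (n + 1) / (n + 1) := by
  rw [fk, ← Finset.Ico_add_one_right_eq_Icc, Finset.sum_Ico_eq_sum_range]
  simp [div_eq_mul_inv, mul_comm, add_comm]

lemma t_nonneg {x : ℝ} (hx : 0 ≤ x) : 0 ≤ 1 - Real.exp (-x) := by
  have : Real.exp (-x) ≤ 1 := Real.exp_le_one_iff.mpr (by linarith)
  linarith

lemma t_lt_one (x : ℝ) : 1 - Real.exp (-x) < 1 := by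
  have := Real.exp_pos (-x); linarith

lemma hasSum_t (x : ℝ) (hx : 0 ≤ x) :
    HasSum (fun n : ℕ => (1 - Real.exp (-x)) ^ (n + 1) / (n + 1)) x := by
  have h : |1 - Real.exp (-x)| < 1 := by
    rw [abs_lt]; exact ⟨by have := t_nonneg hx; linarith, t_lt_one x⟩
  have := Real.hasSum_pow_div_log_of_abs_lt_one h
  simpa using this

/-- the geometric comparison for the tail, for `0 ≤ x ≤ 1`. -/
lemma tail_bound (k : ℕ) (hk : 2 < k) {x : ℝ} (hx : 0 ≤ x) (hx1 : x ≤ 1) :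
    x - fk k x ≤ (1 - Real.exp (-1)) ^ k := by
  set s : ℝ := 1 - Real.exp (-1) with hs
  set t : ℝ := 1 - Real.exp (-x) with ht
  have hts : t ≤ s := by
    have : Real.exp (-1) ≤ Real.exp (-x) := Real.exp_le_exp.mpr (by linarith)
    simp only [ht, hs]; linarith
  have ht0 : 0 ≤ t := t_nonneg hx
  have hs0 : 0 ≤ s := t_nonneg zero_le_one
  have hs1 : s < 1 := t_lt_one 1
  have H := hasSum_t x hx
  -- tail has sum x - fk k x
  have Htail : HasSum (fun n : ℕ => t ^ (n + k + 1) / ((↑(n + k) : ℝ) + 1)) (x - fk k x) := by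
    rw [fk_eq]
    refine (hasSum_nat_add_iff (f := fun n : ℕ => t ^ (n + 1) / ((n : ℝ) + 1)) k).mpr ?_
    rw [sub_add_cancel]
    exact H
  -- geometric majorant
  have Hgeo : HasSum (fun n : ℕ => s ^ (k + 1) / (k + 1) * s ^ n)
      (s ^ (k + 1) / (k + 1) * (1 - s)⁻¹) := by
    exact (hasSum_geometric_of_lt_one hs0 hs1).mul_left _
  have hle : x - fk k x ≤ s ^ (k + 1) / (k + 1) * (1 - s)⁻¹ := by
    refine hasSum_le (fun n => ?_) Htail Hgeo
    have h1 : t ^ (n + k + 1) ≤ s ^ (n + k + 1) := pow_le_pow_left₀ ht0 hts _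
    have h2 : s ^ (n + k + 1) = s ^ (k + 1) * s ^ n := by ring
    have h3 : (0:ℝ) < (k : ℝ) + 1 := by positivity
    have h4 : (k : ℝ) + 1 ≤ (↑(n + k) : ℝ) + 1 := by push_cast; linarith [Nat.cast_nonneg (α := ℝ) n]
    calc t ^ (n + k + 1) / ((↑(n + k) : ℝ) + 1) ≤ s ^ (n + k + 1) / ((k : ℝ) + 1) :=
          div_le_div₀ (by positivity) h1 h3 h4
      _ = s ^ (k + 1) / (k + 1) * s ^ n := by rw [h2]; ring
  -- now bound the geometric sum by s ^ k
  have hinv : (1 - s)⁻¹ = Real.exp 1 := by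
    simp only [hs, sub_sub_cancel, Real.exp_neg]
    exact inv_inv _
  have hexp : Real.exp 1 < 2.7182818286 := Real.exp_one_lt_d9
  have hk4 : (4:ℝ) ≤ (k:ℝ) + 1 := by
    have : (3:ℕ) ≤ k := hk; push_cast; exact_mod_cast by linarith [(by exact_mod_cast this : (3:ℝ) ≤ (k:ℝ))]
  calc x - fk k x ≤ s ^ (k + 1) / (k + 1) * (1 - s)⁻¹ := hle
    _ = s ^ k * (s * Real.exp 1 / ((k:ℝ) + 1)) := by rw [hinv, pow_succ]; ring
    _ ≤ s ^ k * 1 := by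
        refine mul_le_mul_of_nonneg_left ?_ (by positivity)
        rw [div_le_one (by positivity)]
        nlinarith [Real.exp_pos 1]
    _ = s ^ k := mul_one _

lemma s_le_c : 1 - Real.exp (-1) ≤ (2 : ℝ) ^ (-(0.66 : ℝ)) := by
  have hexp : Real.exp 1 < 2.7182818286 := Real.exp_one_lt_d9
  have h1 : (0.36787 : ℝ) ≤ Real.exp (-1) := by
    rw [Real.exp_neg]
    rw [le_inv_comm₀ (by norm_num) (Real.exp_pos 1)]
    calc Real.exp 1 ≤ 2.7182818286 := le_of_lt hexp
      _ ≤ (0.36787 : ℝ)⁻¹ := by norm_num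
  have hs : 1 - Real.exp (-1) ≤ (0.63213 : ℝ) := by linarith
  refine hs.trans ?_
  have hc0 : (0:ℝ) ≤ (2 : ℝ) ^ (-(0.66 : ℝ)) := Real.rpow_nonneg (by norm_num) _
  rw [← pow_le_pow_iff_left₀ (by norm_num) hc0 (n := 50) (by norm_num)]
  have : ((2 : ℝ) ^ (-(0.66 : ℝ))) ^ (50:ℕ) = (2:ℝ) ^ (-(33:ℝ)) := by
    rw [← Real.rpow_natCast ((2:ℝ) ^ (-(0.66:ℝ))) 50, ← Real.rpow_mul (by norm_num)]
    norm_num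
  rw [this]
  have h2 : (2:ℝ) ^ (-(33:ℝ)) = ((2:ℝ) ^ (33:ℕ))⁻¹ := by
    rw [show (-(33:ℝ)) = -((33:ℕ):ℝ) by norm_num, Real.rpow_neg (by norm_num),
      Real.rpow_natCast]
  rw [h2]
  rw [le_inv_comm₀ (by positivity) (by positivity)]
  norm_num

lemma rpow_eq_pow (k : ℕ) : (2 : ℝ) ^ (-(0.66 : ℝ) * k) = ((2:ℝ) ^ (-(0.66:ℝ))) ^ k := by
  rw [Real.rpow_mul (by norm_num), Real.rpow_natCast]

lemma fk_mono (k : ℕ) {x y : ℝ} (hx : 0 ≤ x) (hxy : x ≤ y) : fk k x ≤ fk k y := by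
  rw [fk_eq, fk_eq]
  refine Finset.sum_le_sum fun n _ => ?_
  have h1 : Real.exp (-y) ≤ Real.exp (-x) := Real.exp_le_exp.mpr (by linarith)
  refine div_le_div_of_nonneg_right ?_ (by positivity) |>.trans_eq rfl
  exact pow_le_pow_left₀ (t_nonneg hx) (by linarith) _

theorem stmt10 (k : ℕ) (hk : 2 < k) (x : ℝ) (hx : 0 ≤ x) :
    fk k x ≤ min x (1 + Real.log k) ∧
      min x 1 - (2 : ℝ) ^ (-(0.66 : ℝ) * k) ≤ fk k x := by
  have ht0 : 0 ≤ 1 - Real.exp (-x) := t_nonneg hx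
  have ht1 : 1 - Real.exp (-x) < 1 := t_lt_one x
  constructor
  · refine le_min ?_ ?_
    · rw [fk_eq]
      exact sum_le_hasSum _ (fun n _ => by positivity) (hasSum_t x hx)
    · calc fk k x ≤ ∑ j ∈ Finset.Icc 1 k, (1 / (j : ℝ)) := by
            rw [fk]
            refine Finset.sum_le_sum fun j hj => ?_
            have hj1 : 1 ≤ j := (Finset.mem_Icc.mp hj).1
            have : (1 - Real.exp (-x)) ^ j ≤ 1 := pow_le_one₀ ht0 (by linarith)
            have hjpos : (0:ℝ) < j := by exact_mod_cast hj1
            calc (1 / (j : ℝ)) * (1 - Real.exp (-x)) ^ j ≤ (1 / (j : ℝ)) * 1 :=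
                  mul_le_mul_of_nonneg_left this (by positivity)
              _ = 1 / (j : ℝ) := mul_one _
        _ = (harmonic k : ℝ) := by
            rw [harmonic_eq_sum_Icc]; push_cast; simp [one_div]
        _ ≤ 1 + Real.log k := harmonic_le_one_add_log k
  · -- lower bound
    have hpow : (2 : ℝ) ^ (-(0.66 : ℝ) * k) = ((2:ℝ) ^ (-(0.66:ℝ))) ^ k := rpow_eq_pow k
    have hsk : (1 - Real.exp (-1)) ^ k ≤ (2 : ℝ) ^ (-(0.66 : ℝ) * k) := by
      rw [hpow]
      exact pow_le_pow_left₀ (t_nonneg zero_le_one) s_le_c k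
    rcases le_total x 1 with h1 | h1
    · rw [min_eq_left h1]
      have := tail_bound k hk hx h1
      linarith
    · rw [min_eq_right h1]
      have hb := tail_bound k hk zero_le_one le_rfl
      have hm := fk_mono k zero_le_one h1
      linarith
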